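/- Let k ≥ 1 and T ≥ 1 be integers, η ∈ (0,1], ε₁ ≥ 0, let S be a nonempty set, and let A : S × {1,…,k} → ℝ satisfy −1 ≤ A(s,i) ≤ 1 for all s ∈ S and i. Suppose the sequences (W^t), (w^t), (s^t) satisfy: W_i^1 = 1 for all i; w_i^t = W_i^t / Σ_{j=1}^k W_j^t; s^t ∈ S satisfies Σ_{i=1}^k w_i^t·A(s^t,i) ≤ inf_{s∈S} Σ_{i=1}^k w_i^t·A(s,i) + ε₁; and W_i^{t+1} = W_i^t·exp(η·A(s^t,i)). Then max_{1≤i≤k} (1/T)·Σ_{t=1}^T A(s^t,i) ≤ sup_{w ∈ Δ(k)} inf_{s∈S} Σ_{i=1}^k w_i·A(s,i) + ε₁ + (log k)/(η·T) + η. -/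

import Mathlib

lemma exp_le_one_add_add_sq (x : ℝ) (hx : |x| ≤ 1) : Real.exp x ≤ 1 + x + x ^ 2 := by
  have h := Real.exp_bound hx (by norm_num : 0 < 2)
  have h2 : ∑ i ∈ Finset.range 2, x ^ i / i.factorial = 1 + x := by
    simp [Finset.sum_range_succ]
  rw [h2] at h
  have h3 : Real.exp x - (1 + x) ≤ |x| ^ 2 * (3 / (2 * 2)) := by
    calc Real.exp x - (1+x) ≤ |Real.exp x - (1+x)| := le_abs_self _
    _ ≤ _ := by simpa using h
  nlinarith [sq_abs x, sq_nonneg x]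

theorem hedge_best_response_minimax (k T : ℕ) (hk : 0 < k) (hT : 1 ≤ T)
    (η ε₁ : ℝ) (hη0 : 0 < η) (hη1 : η ≤ 1) (hε : 0 ≤ ε₁)
    (S : Type*) [Nonempty S] (A : S → Fin k → ℝ)
    (hA : ∀ s i, -1 ≤ A s i ∧ A s i ≤ 1)
    (W w : ℕ → Fin k → ℝ) (st : ℕ → S)
    (hW1 : ∀ i, W 1 i = 1)
    (hw : ∀ t i, w t i = W t i / ∑ j, W t j)
    (hst : ∀ t, 1 ≤ t → t ≤ T →
      ∑ i, w t i * A (st t) i ≤ (⨅ s : S, ∑ i, w t i * A s i) + ε₁)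
    (hWrec : ∀ t, 1 ≤ t → t ≤ T →
      ∀ i, W (t + 1) i = W t i * Real.exp (η * A (st t) i)) :
    Finset.univ.sup' (Finset.univ_nonempty_iff.mpr (Fin.pos_iff_nonempty.mp hk))
        (fun i => (1 / (T : ℝ)) * ∑ t ∈ Finset.Icc 1 T, A (st t) i) ≤
      sSup {v : ℝ | ∃ u : Fin k → ℝ, (∀ i, 0 ≤ u i) ∧ (∑ i, u i = 1) ∧
          v = ⨅ s : S, ∑ i, u i * A s i}
        + ε₁ + Real.log k / (η * T) + η := by
  haveI : Nonempty (Fin k) := Fin.pos_iff_nonempty.mp hk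
  set V : Set ℝ := {v : ℝ | ∃ u : Fin k → ℝ, (∀ i, 0 ≤ u i) ∧ (∑ i, u i = 1) ∧
      v = ⨅ s : S, ∑ i, u i * A s i} with hVdef
  -- boundedness facts
  have hbelow : ∀ (u : Fin k → ℝ), (∀ i, 0 ≤ u i) → (∑ i, u i = 1) →
      BddBelow (Set.range fun s : S => ∑ i, u i * A s i) := by
    intro u hu hsum
    refine ⟨-1, ?_⟩
    rintro x ⟨s, rfl⟩
    have : ∑ i, u i * (-1 : ℝ) ≤ ∑ i, u i * A s i :=
      Finset.sum_le_sum fun i _ => mul_le_mul_of_nonneg_left (hA s i).1 (hu i)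
    have h1 : ∑ i, u i * (-1 : ℝ) = -1 := by
      rw [← Finset.sum_mul, hsum]; ring
    linarith
  have hVbdd : BddAbove V := by
    refine ⟨1, ?_⟩
    rintro v ⟨u, hu, hsum, rfl⟩
    have s0 : S := Classical.arbitrary S
    refine le_trans (ciInf_le (hbelow u hu hsum) s0) ?_
    have : ∑ i, u i * A s0 i ≤ ∑ i, u i * (1:ℝ) :=
      Finset.sum_le_sum fun i _ => mul_le_mul_of_nonneg_left (hA s0 i).2 (hu i)
    simpa [hsum] using this
  set v : ℝ := sSup V with hvdef
  set C : ℝ := η * (v + ε₁) + η ^ 2 with hCdef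
  have hT0 : (0:ℝ) < T := by exact_mod_cast hT
  -- positivity of weights
  have hWpos : ∀ t, 1 ≤ t → t ≤ T + 1 → ∀ i, 0 < W t i := by
    intro t
    induction t with
    | zero => omega
    | succ n ih =>
      intro h1 h2 i
      rcases Nat.eq_zero_or_pos n with hn | hn
      · subst hn; rw [hW1]; norm_num
      · rw [hWrec n hn (by omega)]
        exact mul_pos (ih hn (by omega) i) (Real.exp_pos _)
  have hPpos : ∀ t, 1 ≤ t → t ≤ T + 1 → 0 < ∑ j, W t j := by
    intro t h1 h2
    exact Finset.sum_pos (fun j _ => hWpos t h1 h2 j) Finset.univ_nonempty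
  -- simplex facts about w t
  have hwpos : ∀ t, 1 ≤ t → t ≤ T → ∀ i, 0 ≤ w t i := by
    intro t h1 h2 i
    rw [hw]
    exact le_of_lt (div_pos (hWpos t h1 (by omega) i) (hPpos t h1 (by omega)))
  have hwsum : ∀ t, 1 ≤ t → t ≤ T → ∑ i, w t i = 1 := by
    intro t h1 h2
    have hP := hPpos t h1 (by omega)
    have : ∑ i, w t i = (∑ i, W t i) / (∑ j, W t j) := by
      rw [Finset.sum_div]; exact Finset.sum_congr rfl fun i _ => hw t i
    rw [this, div_self hP.ne']
  -- main per-step inequality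
  have hstep : ∀ t, 1 ≤ t → t ≤ T → ∑ j, W (t+1) j ≤ (∑ j, W t j) * Real.exp C := by
    intro t h1 h2
    have hP := hPpos t h1 (by omega)
    have hkey : ∑ i, w t i * A (st t) i ≤ v + ε₁ := by
      have hmem : (⨅ s : S, ∑ i, w t i * A s i) ∈ V :=
        ⟨w t, hwpos t h1 h2, hwsum t h1 h2, rfl⟩
      have := le_csSup hVbdd hmem
      linarith [hst t h1 h2]
    have step1 : ∑ j, W (t+1) j = (∑ j, W t j) * ∑ i, w t i * Real.exp (η * A (st t) i) := by
      rw [Finset.mul_sum]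
      refine Finset.sum_congr rfl fun i _ => ?_
      rw [hWrec t h1 h2 i, hw t i]
      field_simp
    rw [step1]
    refine mul_le_mul_of_nonneg_left ?_ hP.le
    have step2 : ∑ i, w t i * Real.exp (η * A (st t) i)
        ≤ ∑ i, w t i * (1 + η * A (st t) i + (η * A (st t) i) ^ 2) := by
      refine Finset.sum_le_sum fun i _ => ?_
      refine mul_le_mul_of_nonneg_left ?_ (hwpos t h1 h2 i)
      refine exp_le_one_add_add_sq _ ?_
      rw [abs_mul, abs_of_pos hη0]
      have := abs_le.mpr (hA (st t) i)
      nlinarith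
    have step3 : ∑ i, w t i * (1 + η * A (st t) i + (η * A (st t) i) ^ 2)
        ≤ 1 + η * (∑ i, w t i * A (st t) i) + η ^ 2 := by
      have e1 : ∑ i, w t i * (1 + η * A (st t) i + (η * A (st t) i) ^ 2)
          = (∑ i, w t i) + η * (∑ i, w t i * A (st t) i)
            + ∑ i, w t i * (η * A (st t) i) ^ 2 := by
        rw [Finset.mul_sum, ← Finset.sum_add_distrib, ← Finset.sum_add_distrib]
        exact Finset.sum_congr rfl fun i _ => by ring
      rw [e1, hwsum t h1 h2]
      have e2 : ∑ i, w t i * (η * A (st t) i) ^ 2 ≤ η ^ 2 := by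
        have : ∑ i, w t i * (η * A (st t) i) ^ 2 ≤ ∑ i, w t i * η ^ 2 := by
          refine Finset.sum_le_sum fun i _ => ?_
          refine mul_le_mul_of_nonneg_left ?_ (hwpos t h1 h2 i)
          have hAi := hA (st t) i
          have hA2 : (A (st t) i) ^ 2 ≤ 1 := by nlinarith [hAi.1, hAi.2]
          calc (η * A (st t) i) ^ 2 = η ^ 2 * (A (st t) i) ^ 2 := by ring
            _ ≤ η ^ 2 * 1 := mul_le_mul_of_nonneg_left hA2 (sq_nonneg η)
            _ = η ^ 2 := mul_one _
        rw [← Finset.sum_mul, hwsum t h1 h2, one_mul] at this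
        exact this
      linarith
    have step4 : 1 + η * (∑ i, w t i * A (st t) i) + η ^ 2
        ≤ Real.exp C := by
      have h5 : η * (∑ i, w t i * A (st t) i) + η ^ 2 ≤ C := by
        rw [hCdef]
        nlinarith
      have := Real.add_one_le_exp (η * (∑ i, w t i * A (st t) i) + η ^ 2)
      have := Real.exp_le_exp.mpr h5
      linarith
    linarith
  -- potential bound by induction
  have hpot : ∀ n, n ≤ T → ∑ j, W (n+1) j ≤ (k : ℝ) * Real.exp (n * C) := by
    intro n
    induction n with
    | zero =>
      intro _
      simp [hW1]
    | succ m ih =>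
      intro hm
      have h1 : ∑ j, W (m+2) j ≤ (∑ j, W (m+1) j) * Real.exp C :=
        hstep (m+1) (by omega) hm
      have h2 := ih (by omega)
      have hx : (0:ℝ) < Real.exp C := Real.exp_pos _
      calc ∑ j, W (m+1+1) j ≤ (∑ j, W (m+1) j) * Real.exp C := h1
        _ ≤ ((k:ℝ) * Real.exp (m * C)) * Real.exp C :=
            mul_le_mul_of_nonneg_right h2 hx.le
        _ = (k:ℝ) * Real.exp (((m+1 : ℕ) : ℝ) * C) := by
            rw [mul_assoc, ← Real.exp_add]
            congr 1
            push_cast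
            ring
  -- per-coordinate identity
  have hWid : ∀ n, n ≤ T → ∀ i,
      W (n+1) i = Real.exp (η * ∑ t ∈ Finset.Icc 1 n, A (st t) i) := by
    intro n
    induction n with
    | zero => intro _ i; simp [hW1]
    | succ m ih =>
      intro hm i
      rw [hWrec (m+1) (by omega) hm i, ih (by omega) i, ← Real.exp_add]
      congr 1
      rw [Finset.sum_Icc_succ_top (by omega : 1 ≤ m + 1)]
      ring
  -- conclude
  refine Finset.sup'_le _ _ fun i _ => ?_
  have h1 : Real.exp (η * ∑ t ∈ Finset.Icc 1 T, A (st t) i) ≤ (k:ℝ) * Real.exp (T * C) := by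
    rw [← hWid T le_rfl i]
    refine le_trans ?_ (hpot T le_rfl)
    exact Finset.single_le_sum (fun j _ => (hWpos (T+1) (by omega) le_rfl j).le)
      (Finset.mem_univ i)
  have hk0 : (0:ℝ) < k := by exact_mod_cast hk
  have h2 : η * ∑ t ∈ Finset.Icc 1 T, A (st t) i ≤ Real.log k + T * C := by
    have := Real.log_le_log (Real.exp_pos _) h1
    rwa [Real.log_exp, Real.log_mul hk0.ne' (Real.exp_pos _).ne', Real.log_exp] at this
  have hηT : (0:ℝ) < η * T := mul_pos hη0 hT0
  have h3 : (1 / (T:ℝ)) * ∑ t ∈ Finset.Icc 1 T, A (st t) i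
      = (η * ∑ t ∈ Finset.Icc 1 T, A (st t) i) / (η * T) := by
    field_simp
  rw [h3]
  have h4 : (η * ∑ t ∈ Finset.Icc 1 T, A (st t) i) / (η * T)
      ≤ (Real.log k + T * C) / (η * T) := by
    gcongr
  have h5 : (Real.log k + T * C) / (η * T) = v + ε₁ + Real.log k / (η * T) + η := by
    rw [hCdef]
    field_simp
    ring
  linarith
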